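/- The only non-Abelian two-dimensional nilpotent complex Jordan algebra, up to isomorphism, is the one defined on a basis {e₁, e₂} by the single nonzero product φ(e₁,e₁) = e₂. -/

import Mathlib

/-- Bilinearity of a plain product. -/
def IsBilin (K : Type*) [Field K] {V : Type*} [AddCommGroup V] [Module K V]
    (φ : V → V → V) : Prop :=
  (∀ (a : K) (x y z : V), φ (a • x + y) z = a • φ x z + φ y z) ∧
  (∀ (a : K) (x y z : V), φ x (a • y + z) = a • φ x y + φ x z)

/-- Commutativity (symmetry) of the product. -/
def IsComm {V : Type*} (φ : V → V → V) : Prop := ∀ x y, φ x y = φ y x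

/-- The Jordan identity. -/
def JordanId {V : Type*} (φ : V → V → V) : Prop :=
  ∀ x y, φ (φ x x) (φ x y) = φ x (φ (φ x x) y)

/-- Lower central series: `lcs K φ 0 = C¹ = V`, and `lcs K φ m` is the term `C^{m+1}`. -/
def lcs (K : Type*) [Field K] {V : Type*} [AddCommGroup V] [Module K V]
    (φ : V → V → V) : ℕ → Submodule K V
  | 0 => ⊤
  | m + 1 => Submodule.span K {z | ∃ x ∈ lcs K φ m, ∃ y, z = φ x y}

/-- Nilpotency: some term of the lower central series vanishes. -/
def IsNilp (K : Type*) [Field K] {V : Type*} [AddCommGroup V] [Module K V]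
    (φ : V → V → V) : Prop := ∃ k, lcs K φ k = ⊥

lemma lcs_succ_le (K : Type*) [Field K] {V : Type*} [AddCommGroup V] [Module K V]
    (φ : V → V → V) : ∀ m, lcs K φ (m + 1) ≤ lcs K φ m
  | 0 => le_top
  | m + 1 => by
    show Submodule.span K _ ≤ Submodule.span K _
    apply Submodule.span_mono
    rintro z ⟨x, hx, y, rfl⟩
    exact ⟨x, lcs_succ_le K φ m hx, y, rfl⟩

lemma lcs_stab (K : Type*) [Field K] {V : Type*} [AddCommGroup V] [Module K V]
    (φ : V → V → V) (m : ℕ) (h : lcs K φ (m + 1) = lcs K φ m) :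
    ∀ k, lcs K φ (m + k) = lcs K φ m := by
  intro k
  induction k with
  | zero => rfl
  | succ n ih =>
    have : lcs K φ (m + n + 1) = lcs K φ (m + 1) := by
      show Submodule.span K _ = Submodule.span K _
      rw [ih]
    rw [show m + (n + 1) = m + n + 1 from rfl, this, h]

/-- up to isomorphism the only non-Abelian two-dimensional nilpotent
complex Jordan algebra is given by the single nonzero product φ(e₁,e₁) = e₂. -/
theorem dim_two_nilpotent_jordan_classification
    {V : Type*} [AddCommGroup V] [Module ℂ V] (φ : V → V → V)
    (hbil : IsBilin ℂ φ) (hcomm : IsComm φ) (hjord : JordanId φ)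
    (hnilp : IsNilp ℂ φ) (hdim : Module.finrank ℂ V = 2)
    (hnonab : ∃ x y : V, φ x y ≠ 0) :
    ∃ e : Module.Basis (Fin 2) ℂ V,
      φ (e 0) (e 0) = e 1 ∧ φ (e 0) (e 1) = 0 ∧ φ (e 1) (e 0) = 0 ∧ φ (e 1) (e 1) = 0 := by
  haveI : FiniteDimensional ℂ V := .of_finrank_eq_succ hdim
  haveI : Nontrivial V := Module.nontrivial_of_finrank_eq_succ hdim
  obtain ⟨hl, hr⟩ := hbil
  obtain ⟨u, v, huv⟩ := hnonab
  -- basic bilinearity consequences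
  have hz : ∀ z, φ 0 z = 0 := by
    intro z
    have h := hl 1 0 0 z
    simp only [one_smul, add_zero, smul_eq_mul] at h
    exact right_eq_add.mp h
  have hsmul : ∀ (a : ℂ) (x z : V), φ (a • x) z = a • φ x z := by
    intro a x z
    have h := hl a x 0 z
    simpa [hz] using h
  have hadd : ∀ x y z : V, φ (x + y) z = φ x z + φ y z := by
    intro x y z
    have h := hl 1 x y z
    simpa using h
  have haddr : ∀ x y z : V, φ x (y + z) = φ x y + φ x z := by
    intro x y z
    rw [hcomm, hadd, hcomm y x, hcomm z x]
  -- existence of x with φ x x ≠ 0 (polarization)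
  have hsq : ∃ x : V, φ x x ≠ 0 := by
    by_contra h
    push_neg at h
    apply huv
    have h0 := h (u + v)
    rw [hadd, haddr, haddr, h u, h v, zero_add, add_zero, hcomm v u] at h0
    have h2 : (2 : ℂ) • φ u v = 0 := by rw [two_smul]; exact h0
    rcases smul_eq_zero.mp h2 with h' | h'
    · exact absurd h' two_ne_zero
    · exact h'
  -- lcs facts
  obtain ⟨k, hk⟩ := hnilp
  have hmem1 : ∀ x y : V, φ x y ∈ lcs ℂ φ 1 := fun x y =>
    Submodule.subset_span ⟨x, Submodule.mem_top, y, rfl⟩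
  have h1ne : lcs ℂ φ 1 ≠ ⊥ := by
    intro h
    apply huv
    have := hmem1 u v
    rw [h, Submodule.mem_bot] at this
    exact this
  have h1top : lcs ℂ φ 1 ≠ ⊤ := by
    intro h
    have hst := lcs_stab ℂ φ 0 (h.trans rfl) k
    rw [Nat.zero_add, hk] at hst
    exact bot_ne_top (α := Submodule ℂ V) (hst.trans (show lcs ℂ φ 0 = ⊤ from rfl))
  have h21 : lcs ℂ φ 2 ≠ lcs ℂ φ 1 := by
    intro h
    rcases k with _ | n
    · exact top_ne_bot (α := Submodule ℂ V) (show (⊤ : Submodule ℂ V) = ⊥ from hk)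
    · have hst := lcs_stab ℂ φ 1 h n
      rw [show 1 + n = n + 1 from Nat.add_comm 1 n, hk] at hst
      exact h1ne hst.symm
  -- dimension count : lcs 2 = ⊥
  have hlt1 : lcs ℂ φ 1 < ⊤ := lt_top_iff_ne_top.mpr h1top
  have hlt2 : lcs ℂ φ 2 < lcs ℂ φ 1 := (lcs_succ_le ℂ φ 1).lt_of_ne h21
  have d1 : Module.finrank ℂ (lcs ℂ φ 1) < 2 := by
    have h := Submodule.finrank_lt_finrank_of_lt hlt1
    rwa [finrank_top, hdim] at h
  have d2 : Module.finrank ℂ (lcs ℂ φ 2) < Module.finrank ℂ (lcs ℂ φ 1) :=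
    Submodule.finrank_lt_finrank_of_lt hlt2
  have e1 : Module.finrank ℂ (lcs ℂ φ 1) ≠ 0 := fun h =>
    h1ne (Submodule.finrank_eq_zero.mp h)
  have h2bot : lcs ℂ φ 2 = ⊥ := Submodule.finrank_eq_zero.mp (by omega)
  have hkill : ∀ w y : V, w ∈ lcs ℂ φ 1 → φ w y = 0 := by
    intro w y hw
    have : φ w y ∈ lcs ℂ φ 2 := Submodule.subset_span ⟨w, hw, y, rfl⟩
    rw [h2bot, Submodule.mem_bot] at this
    exact this
  -- construct the basis
  obtain ⟨x, hx⟩ := hsq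
  have hli : LinearIndependent ℂ ![x, φ x x] := by
    rw [linearIndependent_fin2]
    constructor
    · simpa using hx
    · intro a ha
      simp only [Matrix.cons_val_one, Matrix.head_cons, Matrix.cons_val_zero] at ha
      apply hx
      have : φ x x = φ (a • φ x x) x := by rw [ha]
      rw [hsmul, hkill _ _ (hmem1 x x), smul_zero] at this
      exact this
  have hcard : Fintype.card (Fin 2) = Module.finrank ℂ V := by simp [hdim]
  refine ⟨basisOfLinearIndependentOfCardEqFinrank hli hcard, ?_, ?_, ?_, ?_⟩ <;>
    rw [coe_basisOfLinearIndependentOfCardEqFinrank]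
  · simp
  · show φ x (φ x x) = 0
    rw [hcomm]
    exact hkill _ _ (hmem1 x x)
  · exact hkill _ _ (hmem1 x x)
  · exact hkill _ _ (hmem1 x x)
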